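/- Let M = [m_{ij}] be an n×n complex Nekrasov matrix whose diagonal entries m_{ii} are real and positive, let D = diag(d_1,…,d_n) with 0 ≤ d_i ≤ 1 for all i, and set M̃ = I − D + DM = [m̃_{ij}]. Then for every i = 1,…,n one has z_i(M̃) ≤ η_i(M). -/

import Mathlib

open Finset

noncomputable def nekH {n : ℕ} {𝕜 : Type*} [RCLike 𝕜] (A : Matrix (Fin n) (Fin n) 𝕜) : Fin n → ℝ
  | i =>
    (∑ j : Fin n, if h : j < i then ‖A i j‖ / ‖A j j‖ * nekH A j else 0)
      + ∑ j : Fin n, if i < j then ‖A i j‖ else 0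
termination_by i => i.val
decreasing_by exact h

def IsNekrasov {n : ℕ} {𝕜 : Type*} [RCLike 𝕜] (A : Matrix (Fin n) (Fin n) 𝕜) : Prop :=
  ∀ i, nekH A i < ‖A i i‖

noncomputable def nekZ {n : ℕ} {𝕜 : Type*} [RCLike 𝕜] (A : Matrix (Fin n) (Fin n) 𝕜) : Fin n → ℝ
  | i => (∑ j : Fin n, if h : j < i then ‖A i j‖ / ‖A j j‖ * nekZ A j else 0) + 1
termination_by i => i.val
decreasing_by exact h

noncomputable def nekEta {n : ℕ} {𝕜 : Type*} [RCLike 𝕜] (M : Matrix (Fin n) (Fin n) 𝕜) : Fin n → ℝ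
  | i => (∑ j : Fin n, if h : j < i then ‖M i j‖ / min ‖M j j‖ 1 * nekEta M j else 0) + 1
termination_by i => i.val
decreasing_by exact h

noncomputable def linftyNorm {n : ℕ} {𝕜 : Type*} [RCLike 𝕜] (A : Matrix (Fin n) (Fin n) 𝕜) : ℝ :=
  ⨆ i, ∑ j, ‖A i j‖

noncomputable def rPlus {n : ℕ} (M : Matrix (Fin n) (Fin n) ℝ) (i : Fin n) : ℝ :=
  Finset.fold max 0 (fun j => M i j) (Finset.univ.erase i)

noncomputable def BPlus {n : ℕ} (M : Matrix (Fin n) (Fin n) ℝ) : Matrix (Fin n) (Fin n) ℝ :=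
  Matrix.of fun i j => M i j - rPlus M i

def IsBNekrasov {n : ℕ} (M : Matrix (Fin n) (Fin n) ℝ) : Prop :=
  IsNekrasov (BPlus M) ∧ ∀ i, 0 < BPlus M i i

def IsLCPSolution {n : ℕ} (M : Matrix (Fin n) (Fin n) ℝ) (q x : Fin n → ℝ) : Prop :=
  (∀ i, 0 ≤ x i) ∧ (∀ i, 0 ≤ (M.mulVec x + q) i) ∧ ∑ i, (M.mulVec x + q) i * x i = 0

def IsPMatrix {n : ℕ} (M : Matrix (Fin n) (Fin n) ℝ) : Prop :=
  ∀ S : Finset (Fin n), 0 < (M.submatrix (fun i : S => (i : Fin n)) (fun j : S => (j : Fin n))).det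

lemma nekZ_nonneg {n : ℕ} {𝕜 : Type*} [RCLike 𝕜] (A : Matrix (Fin n) (Fin n) 𝕜) (i : Fin n) :
    0 ≤ nekZ A i := by
  have ih : ∀ j : Fin n, j < i → 0 ≤ nekZ A j := fun j _ => nekZ_nonneg A j
  rw [nekZ]
  have h1 : (0:ℝ) ≤ ∑ j : Fin n, if h : j < i then ‖A i j‖ / ‖A j j‖ * nekZ A j else 0 := by
    apply Finset.sum_nonneg
    intro j _
    by_cases h : j < i
    · simp only [h, dif_pos]
      exact mul_nonneg (div_nonneg (norm_nonneg _) (norm_nonneg _)) (ih j h)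
    · simp [h]
  linarith
termination_by i.val
decreasing_by exact ‹_›

lemma stmt4_aux {n : ℕ} (M : Matrix (Fin n) (Fin n) ℂ)
    (hdiag : ∀ i, (M i i).im = 0 ∧ 0 < (M i i).re)
    (d : Fin n → ℝ) (hd : ∀ i, 0 ≤ d i ∧ d i ≤ 1) (i : Fin n) :
    nekZ (1 - Matrix.diagonal (fun k => (d k : ℂ)) + Matrix.diagonal (fun k => (d k : ℂ)) * M) i ≤ nekEta M i := by
  have ih : ∀ j : Fin n, j < i →
      nekZ (1 - Matrix.diagonal (fun k => (d k : ℂ)) + Matrix.diagonal (fun k => (d k : ℂ)) * M) j ≤ nekEta M j :=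
    fun j _ => stmt4_aux M hdiag d hd j
  set Mt := 1 - Matrix.diagonal (fun k => (d k : ℂ)) + Matrix.diagonal (fun k => (d k : ℂ)) * M with hMt
  have hoff : ∀ a b : Fin n, a ≠ b → ‖Mt a b‖ ≤ ‖M a b‖ := by
    intro a b hab
    have h1 : Mt a b = (d a : ℂ) * M a b := by
      simp [hMt, Matrix.add_apply, Matrix.sub_apply, Matrix.one_apply_ne hab,
        Matrix.diagonal_apply_ne _ hab, Matrix.diagonal_mul]
    rw [h1, norm_mul]
    have h2 : ‖(d a : ℂ)‖ = |d a| := by simp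
    rw [h2, abs_of_nonneg (hd a).1]
    calc d a * ‖M a b‖ ≤ 1 * ‖M a b‖ := by
          apply mul_le_mul_of_nonneg_right (hd a).2 (norm_nonneg _)
      _ = ‖M a b‖ := one_mul _
  have hdiagnorm : ∀ a : Fin n, ‖M a a‖ = (M a a).re := by
    intro a
    rw [Complex.norm_def, Complex.normSq_apply, (hdiag a).1]
    rw [show (M a a).re * (M a a).re + 0 * 0 = (M a a).re ^ 2 by ring, Real.sqrt_sq (hdiag a).2.le]
  have hdia : ∀ a : Fin n, min ‖M a a‖ 1 ≤ ‖Mt a a‖ := by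
    intro a
    have hM : Mt a a = 1 - (d a : ℂ) + (d a : ℂ) * M a a := by
      simp [hMt, Matrix.add_apply, Matrix.sub_apply, Matrix.one_apply_eq,
        Matrix.diagonal_apply_eq, Matrix.diagonal_mul]
    have hre : (Mt a a).re = 1 - d a + d a * (M a a).re := by
      rw [hM]; simp
    have hlb : min (M a a).re 1 ≤ (Mt a a).re := by
      rw [hre]
      have h1 : min (M a a).re 1 ≤ (M a a).re := min_le_left _ _
      have h2 : min (M a a).re 1 ≤ 1 := min_le_right _ _
      nlinarith [(hd a).1, (hd a).2]
    calc min ‖M a a‖ 1 = min (M a a).re 1 := by rw [hdiagnorm a]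
      _ ≤ (Mt a a).re := hlb
      _ ≤ |(Mt a a).re| := le_abs_self _
      _ ≤ ‖Mt a a‖ := Complex.abs_re_le_norm _
  have hminpos : ∀ a : Fin n, 0 < min ‖M a a‖ 1 := by
    intro a
    rw [hdiagnorm a]
    exact lt_min (hdiag a).2 one_pos
  rw [nekZ, nekEta]
  have hsum : (∑ j : Fin n, if h : j < i then ‖Mt i j‖ / ‖Mt j j‖ * nekZ Mt j else 0)
      ≤ ∑ j : Fin n, if h : j < i then ‖M i j‖ / min ‖M j j‖ 1 * nekEta M j else 0 := by
    apply Finset.sum_le_sum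
    intro j _
    by_cases h : j < i
    · simp only [h, dif_pos]
      apply mul_le_mul
      · exact div_le_div₀ (norm_nonneg _) (hoff i j (Fin.ne_of_gt h)) (hminpos j) (hdia j)
      · exact ih j h
      · exact nekZ_nonneg Mt j
      · exact div_nonneg (norm_nonneg _) (le_of_lt (hminpos j))
    · simp [h]
  linarith
termination_by i.val
decreasing_by exact ‹_›

theorem stmt4 {n : ℕ} (M : Matrix (Fin n) (Fin n) ℂ)
    (hdiag : ∀ i, (M i i).im = 0 ∧ 0 < (M i i).re)
    (hNek : IsNekrasov M)
    (d : Fin n → ℝ) (hd : ∀ i, 0 ≤ d i ∧ d i ≤ 1) (i : Fin n) :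
    nekZ (1 - Matrix.diagonal (fun k => (d k : ℂ)) + Matrix.diagonal (fun k => (d k : ℂ)) * M) i ≤ nekEta M i :=
  stmt4_aux M hdiag d hd i
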